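/- arXiv:1401.7782 — 2 statements merged into one kernel-verified Lean document; each statement's English description precedes it below -/
import Mathlib

section
/- Let F be a field, let v₁,…,vₘ be finitely many pairwise independent (inequivalent) discrete valuations on F, and let n ≥ 1 be an integer invertible in each residue field κ(vᵢ). Denote by Fᵢ the henselization of F at vᵢ. Then the natural map F*/F*ⁿ → ⊕ᵢ Fᵢ*/Fᵢ*ⁿ is surjective. -/
/-- The value group of a normalized discrete valuation. -/
abbrev ZM0 : Type := WithZero (Multiplicative ℤ)

/-- `(H, w, ι)` is a henselization of the discretely valued field `(F, v)`:
`ι : F → H` is a valued field extension, the valuation ring of `w` is henselian,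
and `(H, w)` is initial among henselian valued field extensions of `(F, v)`. -/
structure IsHenselization (F : Type) [Field F] (v : Valuation F ZM0)
    (H : Type) [Field H] (w : Valuation H ZM0) (ι : F →+* H) : Prop where
  comap_eq : w.comap ι = v
  henselian : HenselianLocalRing w.valuationSubring
  universal : ∀ (L : Type) [Field L] (u : Valuation L ZM0) (f : F →+* L),
    u.comap f = v → HenselianLocalRing u.valuationSubring →
      ∃ g : H →+* L, g.comp ι = f ∧ u.comap g = w

namespace Stmt0

open Multiplicative

/-- `e k` is the element `ofAdd k` of the value group. -/
def e (k : ℤ) : ZM0 := ((Multiplicative.ofAdd k : Multiplicative ℤ) : ZM0)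

lemma e_ne_zero (k : ℤ) : e k ≠ 0 := WithZero.coe_ne_zero

lemma e_le_e {k l : ℤ} : e k ≤ e l ↔ k ≤ l := by
  rw [e, e, WithZero.coe_le_coe, Multiplicative.ofAdd_le]

lemma e_lt_e {k l : ℤ} : e k < e l ↔ k < l := by
  rw [e, e, WithZero.coe_lt_coe, Multiplicative.ofAdd_lt]

lemma e_zero : e 0 = 1 := rfl

lemma e_mul (k l : ℤ) : e k * e l = e (k + l) := by
  rw [e, e, e, ← WithZero.coe_mul, ← ofAdd_add]

lemma e_pow (k : ℤ) (N : ℕ) : e k ^ N = e (N * k) := by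
  induction N with
  | zero => simp [e_zero]
  | succ n ih =>
    rw [pow_succ, ih, e_mul]
    congr 1
    push_cast
    ring

lemma e_inv (k : ℤ) : (e k)⁻¹ = e (-k) := by
  rw [e, e, ← WithZero.coe_inv]
  norm_cast

lemma exists_eq_e {x : ZM0} (hx : x ≠ 0) : ∃ k : ℤ, x = e k := by
  obtain ⟨g, rfl⟩ := WithZero.ne_zero_iff_exists.mp hx
  exact ⟨g.toAdd, by rw [e, ofAdd_toAdd]⟩

lemma lt_one_iff_le {x : ZM0} : x < 1 ↔ x ≤ e (-1) := by
  rcases eq_or_ne x 0 with rfl | hx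
  · simp [zero_le']
  · obtain ⟨k, rfl⟩ := exists_eq_e hx
    rw [← e_zero, e_lt_e, e_le_e]
    omega

lemma one_lt_iff_le {x : ZM0} : 1 < x ↔ e 1 ≤ x := by
  rcases eq_or_ne x 0 with rfl | hx
  · constructor
    · intro h; exact absurd h (not_lt.mpr zero_le')
    · intro h; exact absurd (le_antisymm h zero_le') (e_ne_zero 1)
  · obtain ⟨k, rfl⟩ := exists_eq_e hx
    rw [← e_zero, e_lt_e, e_le_e]
    omega

lemma exists_lt_e (x : ZM0) : ∃ N : ℕ, x < e N := by
  rcases eq_or_ne x 0 with rfl | hx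
  · exact ⟨0, zero_lt_iff.mpr (e_ne_zero 0)⟩
  · obtain ⟨k, rfl⟩ := exists_eq_e hx
    exact ⟨(k + 1).toNat, e_lt_e.mpr (by omega)⟩


variable {K : Type} [Field K]

lemma integers (u : Valuation K ZM0) : Valuation.Integers u u.valuationSubring :=
  { hom_inj := Subtype.coe_injective
    map_le_one := fun r => r.2
    exists_of_le_one := fun r hr => ⟨⟨r, hr⟩, rfl⟩ }

lemma isUnit_iff (u : Valuation K ZM0) (a : u.valuationSubring) :
    IsUnit a ↔ u a = 1 :=
  (integers u).isUnit_iff_valuation_eq_one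

lemma mem_maximalIdeal_iff (u : Valuation K ZM0) (a : u.valuationSubring) :
    a ∈ IsLocalRing.maximalIdeal u.valuationSubring ↔ u a < 1 := by
  rw [IsLocalRing.mem_maximalIdeal, mem_nonunits_iff, isUnit_iff]
  exact ⟨fun h => lt_of_le_of_ne a.2 h, fun h => ne_of_lt h⟩

lemma exists_nthRoot (u : Valuation K ZM0) (hh : HenselianLocalRing u.valuationSubring)
    (n : ℕ) (hn : 1 ≤ n) (hnu : IsUnit (n : u.valuationSubring))
    (x : K) (hx : u (x - 1) < 1) : ∃ c : K, c ^ n = x := by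
  have hx1 : u x = 1 := by
    have h1 : u (x - 1) < u 1 := by rwa [Valuation.map_one]
    have := u.map_add_eq_of_lt_right h1
    rwa [sub_add_cancel, Valuation.map_one] at this
  set O := u.valuationSubring with hO
  set X : O := ⟨x, le_of_eq hx1⟩ with hX
  set f : Polynomial O := Polynomial.X ^ n - Polynomial.C X with hf
  have hmonic : f.Monic := Polynomial.monic_X_pow_sub_C X (by omega)
  have heval : f.eval 1 = 1 - X := by simp [hf]
  have hmem : f.eval 1 ∈ IsLocalRing.maximalIdeal O := by
    rw [heval, mem_maximalIdeal_iff]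
    have : ((1 - X : O) : K) = 1 - x := by push_cast; ring
    rw [this, u.map_sub_swap]
    exact hx
  have hderiv : f.derivative.eval 1 = (n : O) := by
    simp [hf, Polynomial.derivative_X_pow]
  obtain ⟨a, ha, -⟩ := hh.is_henselian f hmonic 1 hmem (by rw [hderiv]; exact hnu)
  refine ⟨(a : K), ?_⟩
  have : a ^ n - X = 0 := by
    simpa [hf, Polynomial.IsRoot] using ha
  have : a ^ n = X := by rwa [sub_eq_zero] at this
  have := congrArg (fun y : O => (y : K)) this
  push_cast at this
  exact this


lemma isEquiv_of_le_one_le_one {v w : Valuation K ZM0} (hw : ∃ y : K, 1 < w y)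
    (H : ∀ x : K, v x ≤ 1 → w x ≤ 1) : v.IsEquiv w := by
  rw [Valuation.isEquiv_iff_val_le_one]
  intro x
  refine ⟨H x, fun hx => ?_⟩
  by_contra hv
  push_neg at hv
  obtain ⟨y, hy⟩ := hw
  have hy0 : y ≠ 0 := by
    intro h; rw [h, Valuation.map_zero] at hy; exact absurd hy (not_lt.mpr zero_le')
  have hx0 : x ≠ 0 := by
    intro h; rw [h, Valuation.map_zero] at hv; exact absurd hv (not_lt.mpr zero_le')
  obtain ⟨k, hk⟩ := exists_eq_e ((Valuation.ne_zero_iff v).mpr hx0)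
  have hk1 : 1 ≤ k := e_le_e.mp (by rw [← hk]; exact one_lt_iff_le.mp hv)
  obtain ⟨N, hN⟩ := exists_lt_e (v y)
  have key : v (y * x⁻¹ ^ N) ≤ 1 := by
    rw [map_mul, map_pow, map_inv₀, hk, e_inv, e_pow]
    calc v y * e (N * -k) ≤ e N * e (N * -k) := mul_le_mul_left hN.le _
    _ = e (N + N * -k) := e_mul _ _
    _ ≤ e 0 := e_le_e.mpr (by nlinarith)
    _ = 1 := e_zero
  have key2 := H _ key
  rw [map_mul, map_pow, map_inv₀] at key2
  have hwx0 : w x ≠ 0 := (Valuation.ne_zero_iff w).mpr hx0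
  have : w y ≤ (w x) ^ N := by
    have h3 : w y * ((w x)⁻¹ ^ N * (w x) ^ N) ≤ 1 * (w x) ^ N := by
      rw [← mul_assoc]; exact mul_le_mul_left key2 _
    rwa [inv_pow, inv_mul_cancel₀ (pow_ne_zero _ hwx0), mul_one, one_mul] at h3
  have : w y ≤ 1 := this.trans (pow_le_one' hx N)
  exact absurd hy (not_lt.mpr this)

lemma exists_le_one_lt_one {v w : Valuation K ZM0} (hv : ¬ v.IsEquiv w)
    (hw : ∃ y : K, 1 < w y) : ∃ x : K, v x ≤ 1 ∧ 1 < w x := by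
  by_contra h
  push_neg at h
  exact hv (isEquiv_of_le_one_le_one hw h)

lemma exists_pair {v w : Valuation K ZM0} (h1 : ¬ v.IsEquiv w) (h2 : ¬ w.IsEquiv v)
    (hv : ∃ y : K, 1 < v y) (hw : ∃ y : K, 1 < w y) :
    ∃ z : K, 1 < v z ∧ w z < 1 := by
  obtain ⟨x, hx1, hx2⟩ := exists_le_one_lt_one h1 hw
  obtain ⟨y, hy1, hy2⟩ := exists_le_one_lt_one h2 hv
  have hx0 : x ≠ 0 := by
    intro h; rw [h, Valuation.map_zero] at hx2; exact absurd hx2 (not_lt.mpr zero_le')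
  have hy0 : y ≠ 0 := by
    intro h; rw [h, Valuation.map_zero] at hy2; exact absurd hy2 (not_lt.mpr zero_le')
  obtain ⟨k, hk⟩ := exists_eq_e ((Valuation.ne_zero_iff v).mpr hx0)
  obtain ⟨l, hl⟩ := exists_eq_e ((Valuation.ne_zero_iff v).mpr hy0)
  obtain ⟨k', hk'⟩ := exists_eq_e ((Valuation.ne_zero_iff w).mpr hx0)
  obtain ⟨l', hl'⟩ := exists_eq_e ((Valuation.ne_zero_iff w).mpr hy0)
  have hkle : k ≤ 0 := e_le_e.mp (by rw [← hk, e_zero]; exact hx1)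
  have hlge : 1 ≤ l := e_le_e.mp (by rw [← hl]; exact one_lt_iff_le.mp hy2)
  have hk'ge : 1 ≤ k' := e_le_e.mp (by rw [← hk']; exact one_lt_iff_le.mp hx2)
  have hl'le : l' ≤ 0 := e_le_e.mp (by rw [← hl', e_zero]; exact hy1)
  refine ⟨y / x, ?_, ?_⟩
  · rw [map_div₀, hk, hl, div_eq_mul_inv, e_inv, e_mul, ← e_zero]
    exact e_lt_e.mpr (by omega)
  · rw [map_div₀, hk', hl', div_eq_mul_inv, e_inv, e_mul, ← e_zero]
    exact e_lt_e.mpr (by omega)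

lemma exists_pow_mul_lt (c d γ : ZM0) (hc : c < 1) (hγ : γ ≠ 0) :
    ∃ N : ℕ, ∀ M ≥ N, c ^ M * d < γ := by
  rcases eq_or_ne d 0 with rfl | hd
  · exact ⟨0, fun M _ => by simpa [zero_lt_iff] using hγ⟩
  obtain ⟨a, ha⟩ := exists_eq_e hd
  obtain ⟨g, hg⟩ := exists_eq_e hγ
  have hc' : c ≤ e (-1) := lt_one_iff_le.mp hc
  refine ⟨(a - g + 1).toNat, fun M hM => ?_⟩
  calc c ^ M * d ≤ e (-1) ^ M * d := mul_le_mul_left (pow_le_pow_left' hc' M) d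
  _ = e (M * -1 + a) := by rw [e_pow, ha, e_mul]
  _ < e g := e_lt_e.mpr (by omega)
  _ = γ := hg.symm

lemma exists_uniform_N {ι : Type} (s : Finset ι) (c d : ι → ZM0)
    (hc : ∀ j ∈ s, c j < 1) : ∃ N : ℕ, 1 ≤ N ∧ ∀ j ∈ s, c j ^ N * d j < 1 := by
  choose N hN using fun (j : ι) (hj : j ∈ s) =>
    exists_pow_mul_lt (c j) (d j) 1 (hc j hj) one_ne_zero
  refine ⟨max 1 (s.attach.sup fun j => N j.1 j.2), le_max_left _ _, fun j hj => ?_⟩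
  exact hN j hj _ (le_trans (Finset.le_sup (f := fun (p : {y // y ∈ s}) => N p.1 p.2)
    (Finset.mem_attach _ ⟨j, hj⟩)) (le_max_right _ _))

lemma exists_one_lt_forall_lt {ι : Type} [DecidableEq ι] (vv : ι → Valuation K ZM0) (i : ι)
    (hvi : ∃ y : K, 1 < vv i y) (s : Finset ι)
    (hpair : ∀ j ∈ s, ∃ z : K, 1 < vv i z ∧ vv j z < 1) :
    ∃ z : K, 1 < vv i z ∧ ∀ j ∈ s, vv j z < 1 := by
  induction s using Finset.induction with
  | empty => obtain ⟨y, hy⟩ := hvi; exact ⟨y, hy, by simp⟩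
  | @insert a s' ha ih =>
    obtain ⟨z, hz1, hz2⟩ := ih fun j hj => hpair j (Finset.mem_insert_of_mem hj)
    obtain ⟨t, ht1, ht2⟩ := hpair a (Finset.mem_insert_self a s')
    by_cases haz : vv a z < 1
    · refine ⟨z, hz1, fun j hj => ?_⟩
      rcases Finset.mem_insert.mp hj with rfl | hj
      · exact haz
      · exact hz2 j hj
    obtain ⟨N, hN1, hN⟩ := exists_uniform_N s' (fun j => vv j z) (fun j => vv j t) hz2
    have hz0 : z ≠ 0 := by
      intro h; rw [h, Valuation.map_zero] at hz1; exact absurd hz1 (not_lt.mpr zero_le')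
    by_cases h1 : vv a z ≤ 1
    · refine ⟨z ^ N * t, ?_, fun j hj => ?_⟩
      · rw [map_mul, map_pow]
        calc (1 : ZM0) < vv i t := ht1
        _ ≤ vv i z ^ N * vv i t := le_mul_of_one_le_left' (by
            calc (1:ZM0) = 1 ^ N := (one_pow N).symm
            _ ≤ vv i z ^ N := pow_le_pow_left' hz1.le N)
      · rw [map_mul, map_pow]
        rcases Finset.mem_insert.mp hj with rfl | hj
        · calc vv j z ^ N * vv j t ≤ 1 ^ N * vv j t :=
            mul_le_mul_left (pow_le_pow_left' h1 N) _
          _ = vv j t := by rw [one_pow, one_mul]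
          _ < 1 := ht2
        · exact hN j hj
    · push_neg at h1
      have hN0 : N ≠ 0 := by omega
      set dd : K := 1 + z ^ N with hdd
      have hvad : vv a dd = vv a z ^ N := by
        have hpow : (1:ZM0) < vv a (z ^ N) := by rw [map_pow]; exact one_lt_pow' h1 hN0
        rw [hdd, (vv a).map_add_eq_of_lt_right (by rwa [Valuation.map_one]), map_pow]
      have hvid : vv i dd = vv i z ^ N := by
        have hpow : (1:ZM0) < vv i (z ^ N) := by rw [map_pow]; exact one_lt_pow' hz1 hN0
        rw [hdd, (vv i).map_add_eq_of_lt_right (by rwa [Valuation.map_one]), map_pow]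
      have hdd0 : dd ≠ 0 := by
        intro h
        rw [h, Valuation.map_zero] at hvad
        exact pow_ne_zero N ((Valuation.ne_zero_iff (vv a)).mpr hz0) hvad.symm
      have hzi0 : vv i z ^ N ≠ 0 := pow_ne_zero N ((Valuation.ne_zero_iff (vv i)).mpr hz0)
      have hza0 : vv a z ^ N ≠ 0 := pow_ne_zero N ((Valuation.ne_zero_iff (vv a)).mpr hz0)
      refine ⟨z ^ N * t / dd, ?_, fun j hj => ?_⟩
      · rw [map_div₀, map_mul, map_pow, hvid, mul_comm, mul_div_assoc,
          div_self hzi0, mul_one]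
        exact ht1
      · rcases Finset.mem_insert.mp hj with rfl | hj
        · rw [map_div₀, map_mul, map_pow, hvad, mul_comm, mul_div_assoc,
            div_self hza0, mul_one]
          exact ht2
        · have hjd : vv j dd = 1 := by
            have hlt : vv j (z ^ N) < vv j 1 := by
              rw [Valuation.map_one, map_pow]
              exact pow_lt_one' (hz2 j hj) hN0
            rw [hdd, (vv j).map_add_eq_of_lt_left hlt, Valuation.map_one]
          rw [map_div₀, map_mul, map_pow, hjd, div_one]
          exact hN j hj

lemma weak_approx {m : ℕ} (vv : Fin m → Valuation K ZM0)
    (hone : ∀ i, ∃ y : K, 1 < vv i y)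
    (hindep : ∀ i j, i ≠ j → ¬ (vv i).IsEquiv (vv j))
    (x : Fin m → K) (γ : Fin m → ZM0) (hγ : ∀ i, γ i ≠ 0) :
    ∃ b : K, ∀ i, vv i (b - x i) < γ i := by
  have hz : ∀ i : Fin m, ∃ z : K, 1 < vv i z ∧ ∀ j ∈ Finset.univ.erase i, vv j z < 1 := by
    intro i
    refine exists_one_lt_forall_lt vv i (hone i) _ (fun j hj => ?_)
    have hji : j ≠ i := Finset.ne_of_mem_erase hj
    exact exists_pair (hindep i j (Ne.symm hji)) (hindep j i hji) (hone i) (hone j)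
  choose z hz1 hz2 using hz
  have hz2' : ∀ i j, j ≠ i → vv j (z i) < 1 := fun i j hji =>
    hz2 i j (Finset.mem_erase.mpr ⟨hji, Finset.mem_univ j⟩)
  have hz0 : ∀ i, z i ≠ 0 := by
    intro i h
    have := hz1 i
    rw [h, Valuation.map_zero] at this
    exact absurd this (not_lt.mpr zero_le')
  have hcond : ∀ p : Fin m × Fin m, ∃ N : ℕ, ∀ M ≥ N,
      (if p.2 = p.1 then e (-1) else vv p.1 (z p.2)) ^ M * vv p.1 (x p.2) < γ p.1 := by
    intro p
    refine exists_pow_mul_lt _ _ _ ?_ (hγ p.1)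
    by_cases h : p.2 = p.1
    · rw [if_pos h, ← e_zero]
      exact e_lt_e.mpr (by omega)
    · rw [if_neg h]
      exact hz2' p.2 p.1 (Ne.symm h)
  choose NN hNN using hcond
  obtain ⟨N, hN1, hNle⟩ : ∃ N : ℕ, 1 ≤ N ∧ ∀ p : Fin m × Fin m, NN p ≤ N :=
    ⟨max 1 (Finset.univ.sup NN), le_max_left _ _,
     fun p => le_trans (Finset.le_sup (Finset.mem_univ p)) (le_max_right _ _)⟩
  have hN0 : N ≠ 0 := by omega
  set dd : Fin m → K := fun j => 1 + z j ^ N with hdd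
  have hjd : ∀ j, vv j (dd j) = vv j (z j) ^ N := by
    intro j
    have hpow : (1:ZM0) < vv j (z j ^ N) := by rw [map_pow]; exact one_lt_pow' (hz1 j) hN0
    rw [hdd]
    dsimp only
    rw [(vv j).map_add_eq_of_lt_right (by rwa [Valuation.map_one]), map_pow]
  have hid : ∀ i j, j ≠ i → vv i (dd j) = 1 := by
    intro i j hji
    have hlt : vv i (z j ^ N) < vv i 1 := by
      rw [Valuation.map_one, map_pow]
      exact pow_lt_one' (hz2' j i (Ne.symm hji)) hN0
    rw [hdd]
    dsimp only
    rw [(vv i).map_add_eq_of_lt_left hlt, Valuation.map_one]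
  have hdd0 : ∀ j, dd j ≠ 0 := by
    intro j h
    have := hjd j
    rw [h, Valuation.map_zero] at this
    exact pow_ne_zero N ((Valuation.ne_zero_iff (vv j)).mpr (hz0 j)) this.symm
  refine ⟨∑ j, z j ^ N / dd j * x j, fun i => ?_⟩
  have hsplit : (∑ j, z j ^ N / dd j * x j) - x i
      = ∑ j, (z j ^ N / dd j * x j - if j = i then x i else 0) := by
    rw [Finset.sum_sub_distrib, Finset.sum_ite_eq' Finset.univ i (fun _ => x i)]
    simp
  rw [hsplit]
  refine (vv i).map_sum_lt (hγ i) (fun j _ => ?_)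
  by_cases hji : j = i
  · subst hji
    have h0 : (1:K) + z j ^ N ≠ 0 := hdd0 j
    have hterm : z j ^ N / dd j * x j - x j = -(1 / dd j) * x j := by
      show z j ^ N / (1 + z j ^ N) * x j - x j = -(1 / (1 + z j ^ N)) * x j
      field_simp
      ring
    have h1 : vv j (-(1 / dd j)) = (vv j (z j) ^ N)⁻¹ := by
      rw [Valuation.map_neg, one_div, map_inv₀, hjd j]
    rw [if_pos rfl, hterm, map_mul, h1]
    obtain ⟨k, hk⟩ := exists_eq_e ((Valuation.ne_zero_iff (vv j)).mpr (hz0 j))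
    have hk1 : 1 ≤ k := e_le_e.mp (by rw [← hk]; exact one_lt_iff_le.mp (hz1 j))
    have hb : (vv j (z j) ^ N)⁻¹ ≤ e (-1) ^ N := by
      rw [hk, e_pow, e_inv, e_pow]
      exact e_le_e.mpr (by nlinarith)
    calc (vv j (z j) ^ N)⁻¹ * vv j (x j) ≤ e (-1) ^ N * vv j (x j) := mul_le_mul_left hb _
    _ < γ j := by simpa using hNN (j, j) N (hNle (j, j))
  · rw [if_neg hji, sub_zero, map_mul, map_div₀, map_pow, hid i j hji, div_one]
    have := hNN (i, j) N (hNle (i, j))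
    rw [if_neg hji] at this
    exact this

lemma mem_maxIdeal_pow_iff (u : Valuation K ZM0) {π : K} (hπ : u π = e (-1)) (k : ℕ)
    (x : u.valuationSubring) :
    x ∈ (IsLocalRing.maximalIdeal u.valuationSubring) ^ k ↔ u (x : K) ≤ e (-(k:ℤ)) := by
  have hπ1 : u π ≤ 1 := by rw [hπ, ← e_zero]; exact e_le_e.mpr (by omega)
  have hπ0 : π ≠ 0 := fun h => e_ne_zero (-1) (by rw [← hπ, h, Valuation.map_zero])
  have hπk0 : π ^ k ≠ 0 := pow_ne_zero _ hπ0
  set Pi : u.valuationSubring := ⟨π, hπ1⟩ with hPi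
  have hspan : IsLocalRing.maximalIdeal u.valuationSubring = Ideal.span {Pi} := by
    ext a
    rw [mem_maximalIdeal_iff, Ideal.mem_span_singleton]
    constructor
    · intro ha
      have hle : u ((a : K) / π) ≤ 1 := by
        rw [map_div₀, hπ, div_eq_mul_inv]
        calc u (a:K) * (e (-1))⁻¹ ≤ e (-1) * (e (-1))⁻¹ :=
          mul_le_mul_left (lt_one_iff_le.mp ha) _
        _ = 1 := mul_inv_cancel₀ (e_ne_zero _)
      refine ⟨⟨(a:K)/π, hle⟩, ?_⟩
      apply Subtype.ext
      push_cast
      rw [mul_div_cancel₀ _ hπ0]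
    · rintro ⟨c, rfl⟩
      have : u ((Pi * c : u.valuationSubring) : K) = e (-1) * u (c : K) := by
        push_cast
        rw [map_mul, hπ]
      rw [this]
      calc e (-1) * u (c : K) ≤ e (-1) * 1 := mul_le_mul_right c.2 _
      _ < 1 := by rw [mul_one, ← e_zero]; exact e_lt_e.mpr (by omega)
  rw [hspan, Ideal.span_singleton_pow, Ideal.mem_span_singleton]
  have hπkval : u (π ^ k) = e (-(k:ℤ)) := by
    rw [map_pow, hπ, e_pow]
    congr 1
    push_cast
    ring
  constructor
  · rintro ⟨c, rfl⟩
    have : u ((Pi ^ k * c : u.valuationSubring) : K) = e (-(k:ℤ)) * u (c : K) := by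
      push_cast
      rw [map_mul, map_pow, hπ, e_pow]
      congr 2
      push_cast
      ring
    rw [this]
    calc e (-(k:ℤ)) * u (c : K) ≤ e (-(k:ℤ)) * 1 := mul_le_mul_right c.2 _
    _ = e (-(k:ℤ)) := mul_one _
  · intro h
    have hle : u ((x : K) / π ^ k) ≤ 1 := by
      rw [map_div₀, hπkval, div_eq_mul_inv]
      calc u (x:K) * (e (-(k:ℤ)))⁻¹ ≤ e (-(k:ℤ)) * (e (-(k:ℤ)))⁻¹ := mul_le_mul_left h _
      _ = 1 := mul_inv_cancel₀ (e_ne_zero _)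
    refine ⟨⟨(x : K) / π ^ k, hle⟩, ?_⟩
    apply Subtype.ext
    push_cast
    rw [mul_div_cancel₀ _ hπk0]

lemma henselian_completion (L : Type) [Field L] [Valued L ZM0] [CompleteSpace L]
    {π : L} (hπ : Valued.v π = e (-1)) :
    HenselianLocalRing (Valued.v (R := L)).valuationSubring := by
  set u : Valuation L ZM0 := Valued.v with hu
  set O := u.valuationSubring with hO
  have htop : ∀ (J : Ideal O), (J • ⊤ : Submodule O O) = J := fun J => by
    rw [smul_eq_mul, Ideal.mul_top]
  have hHaus : IsHausdorff (IsLocalRing.maximalIdeal O) O := by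
    constructor
    intro x hx
    have hval : ∀ k : ℕ, u (x:L) ≤ e (-(k:ℤ)) := by
      intro k
      have := hx k
      rw [htop, SModEq.zero] at this
      exact (mem_maxIdeal_pow_iff u hπ k x).mp this
    have hzero : u (x : L) = 0 := by
      by_contra hne
      obtain ⟨k0, hk0⟩ := exists_eq_e hne
      have := hval (k0.natAbs + 1)
      rw [hk0] at this
      have := e_le_e.mp this
      omega
    have : (x : L) = 0 := by
      by_contra hne
      exact (Valuation.ne_zero_iff u).mpr hne hzero
    exact Subtype.ext this
  have hPre : IsPrecomplete (IsLocalRing.maximalIdeal O) O := by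
    constructor
    intro f hf
    have hf' : ∀ {a b : ℕ}, a ≤ b → u ((f b : L) - (f a : L)) ≤ e (-(a:ℤ)) := by
      intro a b hab
      have := hf hab
      rw [htop, SModEq.sub_mem] at this
      have h2 := (mem_maxIdeal_pow_iff u hπ a _).mp this
      have h3 : ((f a - f b : O) : L) = (f a : L) - (f b : L) := by push_cast; ring
      rw [h3, u.map_sub_swap] at h2
      exact h2
    have hcs : CauchySeq (fun n => (f n : L)) := by
      rw [(Valued.hasBasis_uniformity L ZM0).cauchySeq_iff]
      intro γ _
      obtain ⟨k0, hk0⟩ := exists_eq_e (x := MonoidWithZeroHom.ValueGroup₀.embedding γ.1)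
        (by rw [← zero_lt_iff, ← map_zero (MonoidWithZeroHom.ValueGroup₀.embedding (f := (.ofClass u))),
          MonoidWithZeroHom.ValueGroup₀.embedding_strictMono.lt_iff_lt, zero_lt_iff]; exact γ.ne_zero)
      refine ⟨k0.natAbs + 1, fun b hb c hc => ?_⟩
      show u.restrict ((f c : L) - (f b : L)) < γ.1
      rw [Valuation.restrict_lt_iff_lt_embedding]
      have hlt : e (-(((k0.natAbs + 1 : ℕ)) : ℤ)) < MonoidWithZeroHom.ValueGroup₀.embedding γ.1 := by
        rw [hk0]
        exact e_lt_e.mpr (by omega)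
      rcases le_total b c with h | h
      · exact lt_of_le_of_lt (le_trans (hf' h) (e_le_e.mpr (by omega))) hlt
      · rw [u.map_sub_swap]
        exact lt_of_le_of_lt (le_trans (hf' h) (e_le_e.mpr (by omega))) hlt
    obtain ⟨l, hl⟩ := cauchySeq_tendsto_of_complete hcs
    have hball : ∀ a : ℕ, u (l - (f a : L)) ≤ e (-(a:ℤ)) := by
      intro a
      have hcl : IsClosed {y : L | u (y - (f a : L)) ≤ e (-(a:ℤ))} := by
        rw [← isOpen_compl_iff, isOpen_iff_mem_nhds]
        intro y hy
        simp only [Set.mem_compl_iff, Set.mem_setOf_eq, not_le] at hy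
        have hne : u (y - (f a : L)) ≠ 0 := ne_of_gt (lt_of_le_of_lt zero_le' hy)
        rw [Valued.mem_nhds]
        refine ⟨Units.mk0 (u.restrict (y - (f a : L)))
          (by rw [← zero_lt_iff, Valuation.restrict_pos_iff]; exact zero_lt_iff.mpr hne), fun t ht => ?_⟩
        simp only [Set.mem_setOf_eq, Units.val_mk0, Valuation.restrict_lt_iff] at ht
        simp only [Set.mem_compl_iff, Set.mem_setOf_eq, not_le]
        have heq : t - (f a : L) = (t - y) + (y - (f a : L)) := by ring
        rw [heq, u.map_add_eq_of_lt_right ((Valuation.restrict_lt_iff (v := u)).mp ht)]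
        exact hy
      refine hcl.mem_of_tendsto hl (Filter.eventually_atTop.mpr ⟨a, fun b hb => ?_⟩)
      exact hf' hb
    have hlO : u l ≤ 1 := by
      have heq : l = (l - (f 0 : L)) + (f 0 : L) := by ring
      rw [heq]
      refine le_trans (u.map_add _ _) (max_le (le_trans (hball 0) ?_) (f 0).2)
      rw [show (-((0:ℕ):ℤ)) = 0 by norm_num, e_zero]
    refine ⟨⟨l, hlO⟩, fun a => ?_⟩
    rw [htop, SModEq.sub_mem]
    apply (mem_maxIdeal_pow_iff u hπ a _).mpr
    have h3 : ((f a - ⟨l, hlO⟩ : O) : L) = (f a : L) - l := by push_cast; ring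
    rw [h3, u.map_sub_swap]
    exact hball a
  haveI := hHaus
  haveI := hPre
  haveI : IsAdicComplete (IsLocalRing.maximalIdeal O) O := ⟨⟩
  haveI hh : HenselianRing O (IsLocalRing.maximalIdeal O) := inferInstance
  refine ⟨fun fp hmon a₀ h1 h2 => ?_⟩
  exact hh.is_henselian fp hmon a₀ h1 (h2.map (Ideal.Quotient.mk _))

set_option maxHeartbeats 1000000 in
lemma exists_approx (F : Type) [Field F] (v : Valuation F ZM0)
    (hs : Function.Surjective v) {H : Type} [Field H] (w : Valuation H ZM0)
    (ι : F →+* H) (hh : IsHenselization F v H w ι) (a : H) (ha : a ≠ 0) :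
    ∃ x : F, w (ι x - a) < w a := by
  letI : Valued F ZM0 := Valued.mk' v
  letI : Field (UniformSpace.Completion F) := UniformSpace.Completion.instField
  letI : Valued (UniformSpace.Completion F) ZM0 := Valued.valuedCompletion
  letI : CompleteSpace (UniformSpace.Completion F) := UniformSpace.Completion.completeSpace F
  obtain ⟨p, hp⟩ := hs (e (-1))
  have hπ : (Valued.v (R := UniformSpace.Completion F) (Γ₀ := ZM0)) (UniformSpace.Completion.coe' p) = e (-1) := by
    exact (Valued.valuedCompletion_apply p).trans hp
  have hhens := henselian_completion (UniformSpace.Completion F) hπ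
  have hcomap : (Valued.v (R := UniformSpace.Completion F)).comap
      (UniformSpace.Completion.coeRingHom) = v := by
    apply Valuation.ext
    intro x
    exact Valued.valuedCompletion_apply x
  obtain ⟨g, hg1, hg2⟩ := hh.universal (UniformSpace.Completion F) Valued.v
    UniformSpace.Completion.coeRingHom hcomap hhens
  have hga : Valued.v (g a) = w a := by rw [← hg2]; rfl
  have hwa0 : w a ≠ 0 := (Valuation.ne_zero_iff w).mpr ha
  have hmem : {y : UniformSpace.Completion F | Valued.v (y - g a) < w a} ∈ nhds (g a) := by
    rw [Valued.mem_nhds]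
    refine ⟨Units.mk0 (Valued.v.restrict (g a))
      (by rw [← zero_lt_iff, Valuation.restrict_pos_iff, hga]; exact zero_lt_iff.mpr hwa0),
      fun t ht => ?_⟩
    simp only [Set.mem_setOf_eq, Units.val_mk0, Valuation.restrict_lt_iff] at ht ⊢
    rw [← hga]; exact ht
  obtain ⟨x, hx⟩ := UniformSpace.Completion.denseRange_coe.mem_nhds hmem
  refine ⟨x, ?_⟩
  have hwg : w (ι x - a) = Valued.v (g (ι x - a)) := by rw [← hg2]; rfl
  have hgι : g (ι x) = UniformSpace.Completion.coeRingHom x := RingHom.congr_fun hg1 x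
  rw [hwg, g.map_sub, hgι]
  exact hx

lemma isUnit_natCast {F H : Type} [Field F] [Field H] (v : Valuation F ZM0)
    (w : Valuation H ZM0) (ι : F →+* H) (hcomap : w.comap ι = v) (n : ℕ)
    (hninv : IsUnit (n : IsLocalRing.ResidueField v.valuationSubring)) :
    IsUnit (n : w.valuationSubring) := by
  have hval : ∀ x : F, w (ι x) = v x := fun x => by rw [← hcomap]; rfl
  let ρ : v.valuationSubring →+* w.valuationSubring :=
    { toFun := fun x => ⟨ι x, by rw [Valuation.mem_valuationSubring_iff, hval]; exact x.2⟩
      map_one' := by apply Subtype.ext; exact ι.map_one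
      map_mul' := fun x y => by apply Subtype.ext; exact ι.map_mul _ _
      map_zero' := by apply Subtype.ext; exact ι.map_zero
      map_add' := fun x y => by apply Subtype.ext; exact ι.map_add _ _ }
  haveI : IsLocalHom ρ := by
    constructor
    intro x hx
    rw [isUnit_iff] at hx ⊢
    rw [← hval x]
    exact hx
  have h2 : IsUnit ((IsLocalRing.residue w.valuationSubring) (n : w.valuationSubring)) := by
    rw [map_natCast, ← map_natCast (IsLocalRing.ResidueField.map ρ) n]
    exact hninv.map _
  by_contra hnu
  have hmem : (n : w.valuationSubring) ∈ IsLocalRing.maximalIdeal w.valuationSubring :=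
    (IsLocalRing.mem_maximalIdeal _).mpr (mem_nonunits_iff.mpr hnu)
  have h0 : (IsLocalRing.residue w.valuationSubring) (n : w.valuationSubring) = 0 :=
    Ideal.Quotient.eq_zero_iff_mem.mpr hmem
  rw [h0] at h2
  exact not_isUnit_zero h2

end Stmt0

open Stmt0

/-- Let `F` be a field, `v₁, …, vₘ` finitely many pairwise
inequivalent normalized discrete valuations on `F`, and `n ≥ 1` an integer
invertible in each residue field `κ(vᵢ)`.  Let `Fᵢ` be the henselization of
`F` at `vᵢ`.  Then the natural map `F*/F*ⁿ → ⊕ᵢ Fᵢ*/Fᵢ*ⁿ` is surjective: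
for any family `(aᵢ)` of units of the `Fᵢ`, there is `b ∈ F*` mapping to `aᵢ`
modulo `n`-th powers in each `Fᵢ`. -/
theorem units_mod_nth_powers_surjective (F : Type) [Field F]
    (m : ℕ) (v : Fin m → Valuation F ZM0)
    (hnormalized : ∀ i, Function.Surjective (v i))
    (hindep : ∀ i j, i ≠ j → ¬ (v i).IsEquiv (v j))
    (Fh : Fin m → Type) [∀ i, Field (Fh i)]
    (w : ∀ i, Valuation (Fh i) ZM0) (ι : ∀ i, F →+* Fh i)
    (hhens : ∀ i, IsHenselization F (v i) (Fh i) (w i) (ι i))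
    (n : ℕ) (hn : 1 ≤ n)
    (hninv : ∀ i, IsUnit (n : IsLocalRing.ResidueField (v i).valuationSubring)) :
    ∀ a : ∀ i, (Fh i)ˣ, ∃ b : Fˣ, ∀ i, ∃ c : (Fh i)ˣ,
      Units.map (ι i : F →* Fh i) b = a i * c ^ n := by
  intro a
  rcases Nat.eq_zero_or_pos m with rfl | hm
  · exact ⟨1, fun i => i.elim0⟩
  have hx : ∀ i, ∃ x : F, w i (ι i x - (a i : Fh i)) < w i (a i : Fh i) := fun i =>
    exists_approx F (v i) (hnormalized i) (w i) (ι i) (hhens i) (a i : Fh i) (Units.ne_zero _)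
  choose x hx using hx
  have hval : ∀ i (t : F), w i (ι i t) = v i t := fun i t => by rw [← (hhens i).comap_eq]; rfl
  have hai0 : ∀ i, w i ((a i : Fh i)) ≠ 0 := fun i =>
    (Valuation.ne_zero_iff _).mpr (Units.ne_zero _)
  have hwx : ∀ i, w i (ι i (x i)) = w i (a i : Fh i) := by
    intro i
    have heq : ι i (x i) = (ι i (x i) - (a i : Fh i)) + (a i : Fh i) := by ring
    rw [heq, (w i).map_add_eq_of_lt_right (hx i)]
  have hvx : ∀ i, v i (x i) = w i (a i : Fh i) := fun i => by rw [← hval i (x i)]; exact hwx i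
  have hx0 : ∀ i, v i (x i) ≠ 0 := fun i => by rw [hvx i]; exact hai0 i
  have hone : ∀ i, ∃ y : F, 1 < v i y := by
    intro i
    obtain ⟨y, hy⟩ := hnormalized i (e 1)
    exact ⟨y, by rw [hy, ← e_zero]; exact e_lt_e.mpr (by omega)⟩
  obtain ⟨b, hb⟩ := weak_approx v hone hindep x (fun i => v i (x i)) hx0
  have hvb : ∀ i, v i b = v i (x i) := by
    intro i
    have heq : b = (b - x i) + x i := by ring
    rw [heq, (v i).map_add_eq_of_lt_right (hb i)]
  have hb0 : b ≠ 0 := by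
    intro h
    apply hx0 ⟨0, hm⟩
    rw [← hvb ⟨0, hm⟩, h, Valuation.map_zero]
  refine ⟨Units.mk0 b hb0, fun i => ?_⟩
  have hιb0 : ι i b ≠ 0 := (map_ne_zero (ι i)).mpr hb0
  have hkey : w i (ι i b - (a i : Fh i)) < w i (a i : Fh i) := by
    have heq : ι i b - (a i : Fh i) = ι i (b - x i) + (ι i (x i) - (a i : Fh i)) := by
      rw [map_sub]; ring
    rw [heq]
    refine lt_of_le_of_lt ((w i).map_add _ _) (max_lt ?_ (hx i))
    rw [hval]
    exact lt_of_lt_of_le (hb i) (le_of_eq (hvx i))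
  set y : Fh i := ι i b * (((a i)⁻¹ : (Fh i)ˣ) : Fh i) with hy
  have hy0 : y ≠ 0 := mul_ne_zero hιb0 (Units.ne_zero _)
  have hinva : (((a i)⁻¹ : (Fh i)ˣ) : Fh i) = ((a i : Fh i))⁻¹ := by
    rw [← Units.val_inv_eq_inv_val]
  have hy1 : w i (y - 1) < 1 := by
    have heq : y - 1 = (ι i b - (a i : Fh i)) * ((a i : Fh i))⁻¹ := by
      rw [hy, hinva]
      field_simp
    rw [heq, map_mul, map_inv₀]
    rcases eq_or_ne (w i (ι i b - (a i : Fh i))) 0 with h0 | h0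
    · rw [h0, zero_mul]
      exact zero_lt_iff.mpr one_ne_zero
    · obtain ⟨s, hs⟩ := exists_eq_e h0
      obtain ⟨r, hr⟩ := exists_eq_e (hai0 i)
      have hsr : s < r := by
        rw [hs, hr] at hkey
        exact e_lt_e.mp hkey
      rw [hs, hr, e_inv, e_mul, ← e_zero]
      exact e_lt_e.mpr (by omega)
  obtain ⟨c0, hc0⟩ := exists_nthRoot (w i) (hhens i).henselian n hn
    (isUnit_natCast (v i) (w i) (ι i) (hhens i).comap_eq n (hninv i)) y hy1
  have hc00 : c0 ≠ 0 := by
    intro h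
    rw [h, zero_pow (by omega)] at hc0
    exact hy0 hc0.symm
  refine ⟨Units.mk0 c0 hc00, ?_⟩
  apply Units.ext
  show ι i b = (a i : Fh i) * (Units.mk0 c0 hc00 ^ n : (Fh i)ˣ)
  rw [Units.val_pow_eq_pow_val, Units.val_mk0, hc0, hy, hinva]
  field_simp
end

section
/- Let F be a field of characteristic ≠ 2 and r ≥ 1 an integer. If p(F(t)) ≤ 2ʳ for the rational function field F(t), then for every finite field extension L/F with L nonreal, one has s(L) ≤ 2^{r−1}. -/
/-- `a` is a sum of `m` squares in `F`. -/
def SumSqRep (F : Type*) [Field F] (m : ℕ) (a : F) : Prop :=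
  ∃ f : Fin m → F, a = ∑ i, f i ^ 2

/-- The level `s(F)` of a field: the least number of squares summing to `-1`
(`⊤` if `F` is formally real). -/
noncomputable def fieldLevel (F : Type*) [Field F] : ℕ∞ :=
  sInf {n : ℕ∞ | ∃ m : ℕ, n = m ∧ SumSqRep F m (-1)}

/-- The Pythagoras number `p(F)`: the least `p` such that every sum of squares
in `F` is a sum of `p` squares. -/
noncomputable def pythagorasNumber (F : Type*) [Field F] : ℕ∞ :=
  sInf {n : ℕ∞ | ∃ m : ℕ, n = m ∧ ∀ a : F, (∃ k, SumSqRep F k a) → SumSqRep F m a}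

/-- `F` is nonreal: `-1` is a sum of squares in `F`. -/
def IsNonreal (F : Type*) [Field F] : Prop := ∃ m, SumSqRep F m (-1)

set_option synthInstance.maxHeartbeats 800000
set_option maxHeartbeats 1600000

open Polynomial Finset Matrix

section NSdev

variable {E : Type*} [Field E]

/-- `ℕ`-indexed version of `SumSqRep`. -/
def NS (E : Type*) [Field E] (m : ℕ) (a : E) : Prop :=
  ∃ f : ℕ → E, a = ∑ i ∈ Finset.range m, f i ^ 2

theorem sumSqRep_iff_ns {m : ℕ} {a : E} : SumSqRep E m a ↔ NS E m a := by
  constructor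
  · rintro ⟨f, rfl⟩
    refine ⟨fun j => if h : j < m then f ⟨j, h⟩ else 0, ?_⟩
    rw [← Fin.sum_univ_eq_sum_range]
    exact Finset.sum_congr rfl fun i _ => by simp [i.isLt]
  · rintro ⟨f, rfl⟩
    exact ⟨fun i => f i, by rw [Fin.sum_univ_eq_sum_range (fun i => f i ^ 2)]⟩

theorem NS.mono {m m' : ℕ} {a : E} (h : NS E m a) (hm : m ≤ m') : NS E m' a := by
  obtain ⟨f, rfl⟩ := h
  refine ⟨fun j => if j < m then f j else 0, ?_⟩
  rw [← Finset.sum_subset (Finset.range_subset_range.2 hm) (fun x _ hx => ?_)]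
  · exact Finset.sum_congr rfl fun i hi => by simp [Finset.mem_range.1 hi]
  · simp only [Finset.mem_range] at hx
    simp [hx]

end NSdev

section Pfister

variable {E : Type*} [Field E]

/-- Index type of cardinality `2^k`. -/
def Idx : ℕ → Type
  | 0 => Unit
  | (k+1) => Idx k ⊕ Idx k

instance Idx.fintype : ∀ k, Fintype (Idx k)
  | 0 => inferInstanceAs (Fintype Unit)
  | (k+1) => letI := Idx.fintype k; inferInstanceAs (Fintype (Idx k ⊕ Idx k))

instance Idx.deceq : ∀ k, DecidableEq (Idx k)
  | 0 => inferInstanceAs (DecidableEq Unit)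
  | (k+1) => letI := Idx.deceq k; inferInstanceAs (DecidableEq (Idx k ⊕ Idx k))

theorem Idx.card : ∀ k, Fintype.card (Idx k) = 2 ^ k
  | 0 => rfl
  | (k+1) => by
      show Fintype.card (Idx k ⊕ Idx k) = 2 ^ (k + 1)
      rw [Fintype.card_sum, Idx.card k, pow_succ]
      ring

theorem ns_iff_idx {k : ℕ} {a : E} :
    (∃ f : Idx k → E, a = ∑ i, f i ^ 2) ↔ NS E (2 ^ k) a := by
  rw [← Idx.card k]
  constructor
  · rintro ⟨f, rfl⟩
    set e := (Fintype.equivFin (Idx k)).symm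
    refine ⟨fun j => if h : j < Fintype.card (Idx k) then f (e ⟨j, h⟩) else 0, ?_⟩
    rw [← Fin.sum_univ_eq_sum_range, ← Equiv.sum_comp e (fun i => f i ^ 2)]
    exact Finset.sum_congr rfl fun i _ => by simp [i.isLt]
  · rintro ⟨f, rfl⟩
    set e := Fintype.equivFin (Idx k)
    refine ⟨fun i => f (e i), ?_⟩
    rw [← Fin.sum_univ_eq_sum_range (fun i => f i ^ 2)]
    exact (Equiv.sum_comp e (fun j : Fin (Fintype.card (Idx k)) => f j ^ 2)).symm

theorem self_mul_transpose {n : Type*} [Fintype n] [DecidableEq n] {T : Matrix n n E} {a : E}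
    (ha : a ≠ 0) (h : Tᵀ * T = a • 1) : T * Tᵀ = a • 1 := by
  have h1 : (a⁻¹ • Tᵀ) * T = 1 := by
    rw [Matrix.smul_mul, h, smul_smul, inv_mul_cancel₀ ha, one_smul]
  have h2 : T * (a⁻¹ • Tᵀ) = 1 := mul_eq_one_comm.2 h1
  rw [Matrix.mul_smul] at h2
  calc T * Tᵀ = a • (a⁻¹ • (T * Tᵀ)) := by rw [smul_smul, mul_inv_cancel₀ ha, one_smul]
  _ = a • (1 : Matrix n n E) := by rw [h2]

theorem exists_pfister_matrix : ∀ (k : ℕ) {a : E}, a ≠ 0 →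
    (∃ f : Idx k → E, a = ∑ i, f i ^ 2) →
    ∃ T : Matrix (Idx k) (Idx k) E, Tᵀ * T = a • 1 := by
  intro k
  induction k with
  | zero =>
    rintro a ha ⟨f, hf⟩
    haveI : Unique (Idx 0) := inferInstanceAs (Unique Unit)
    refine ⟨Matrix.of fun _ _ => f (), ?_⟩
    ext i j
    have hij : i = j := Subsingleton.elim i j
    subst hij
    simp only [Matrix.mul_apply, Matrix.transpose_apply, Matrix.of_apply, Matrix.smul_apply,
      Matrix.one_apply_eq, smul_eq_mul, mul_one]
    rw [Fintype.sum_unique, hf, Fintype.sum_unique]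
    show f () * f () = f () ^ 2
    ring
  | succ k ih =>
    rintro a ha ⟨f, hf⟩
    have hsplit : a = (∑ i : Idx k, f (Sum.inl i) ^ 2) + (∑ i : Idx k, f (Sum.inr i) ^ 2) := by
      rw [hf]; exact Fintype.sum_sum_type (fun i => f i ^ 2)
    set a₁ := ∑ i : Idx k, f (Sum.inl i) ^ 2 with ha1
    set a₂ := ∑ i : Idx k, f (Sum.inr i) ^ 2 with ha2
    by_cases h1 : a₁ = 0
    · have h2 : a₂ ≠ 0 := fun h' => ha (by rw [hsplit, h1, h', add_zero])
      have ha2a : a = a₂ := by rw [hsplit, h1, zero_add]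
      obtain ⟨T₂, hT₂⟩ := ih h2 ⟨fun i => f (Sum.inr i), ha2⟩
      refine ⟨Matrix.fromBlocks T₂ 0 0 T₂, ?_⟩
      show (Matrix.fromBlocks T₂ 0 0 T₂)ᵀ * Matrix.fromBlocks T₂ 0 0 T₂ = a • (1 : Matrix (Idx k ⊕ Idx k) (Idx k ⊕ Idx k) E)
      rw [Matrix.fromBlocks_transpose, Matrix.fromBlocks_multiply]
      rw [ha2a, ← Matrix.fromBlocks_one (l := Idx k) (m := Idx k), Matrix.fromBlocks_smul]
      simp [hT₂]
    · by_cases h2 : a₂ = 0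
      · have ha1a : a = a₁ := by rw [hsplit, h2, add_zero]
        obtain ⟨T₁, hT₁⟩ := ih h1 ⟨fun i => f (Sum.inl i), ha1⟩
        refine ⟨Matrix.fromBlocks T₁ 0 0 T₁, ?_⟩
        show (Matrix.fromBlocks T₁ 0 0 T₁)ᵀ * Matrix.fromBlocks T₁ 0 0 T₁ = a • (1 : Matrix (Idx k ⊕ Idx k) (Idx k ⊕ Idx k) E)
        rw [Matrix.fromBlocks_transpose, Matrix.fromBlocks_multiply]
        rw [ha1a, ← Matrix.fromBlocks_one (l := Idx k) (m := Idx k), Matrix.fromBlocks_smul]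
        simp [hT₁]
      · obtain ⟨T₁, hT₁⟩ := ih h1 ⟨fun i => f (Sum.inl i), ha1⟩
        obtain ⟨T₂, hT₂⟩ := ih h2 ⟨fun i => f (Sum.inr i), ha2⟩
        have hT₁' : T₁ * T₁ᵀ = a₁ • 1 := self_mul_transpose h1 hT₁
        have hT₂' : T₂ * T₂ᵀ = a₂ • 1 := self_mul_transpose h2 hT₂
        set X : Matrix (Idx k) (Idx k) E := (-a₁⁻¹) • (T₁ * T₂ᵀ * T₁) with hX
        refine ⟨Matrix.fromBlocks T₁ T₂ X T₁, ?_⟩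
        show (Matrix.fromBlocks T₁ T₂ X T₁)ᵀ * Matrix.fromBlocks T₁ T₂ X T₁ = a • (1 : Matrix (Idx k ⊕ Idx k) (Idx k ⊕ Idx k) E)
        rw [Matrix.fromBlocks_transpose, Matrix.fromBlocks_multiply]
        have hXt : Xᵀ = (-a₁⁻¹) • (T₁ᵀ * T₂ * T₁ᵀ) := by
          rw [hX, Matrix.transpose_smul, Matrix.transpose_mul, Matrix.transpose_mul]
          simp [Matrix.mul_assoc]
        have e11 : T₁ᵀ * T₁ + Xᵀ * X = a • 1 := by
          have : Xᵀ * X = a₂ • 1 := by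
            rw [hXt, hX, Matrix.smul_mul, Matrix.mul_smul, smul_smul]
            have : T₁ᵀ * T₂ * T₁ᵀ * (T₁ * T₂ᵀ * T₁) = (a₁ * a₂ * a₁) • (1 : Matrix (Idx k) (Idx k) E) := by
              calc T₁ᵀ * T₂ * T₁ᵀ * (T₁ * T₂ᵀ * T₁)
                  = T₁ᵀ * T₂ * (T₁ᵀ * T₁) * T₂ᵀ * T₁ := by
                    simp only [Matrix.mul_assoc]
                _ = a₁ • (T₁ᵀ * (T₂ * T₂ᵀ) * T₁) := by
                    rw [hT₁]
                    simp only [Matrix.mul_smul, Matrix.smul_mul, Matrix.mul_one]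
                    simp only [Matrix.mul_assoc]
                _ = (a₁ * a₂) • (T₁ᵀ * T₁) := by
                    rw [hT₂']
                    simp only [Matrix.mul_smul, Matrix.smul_mul, Matrix.mul_one, smul_smul]
                _ = (a₁ * a₂ * a₁) • 1 := by rw [hT₁, smul_smul]
            rw [this, smul_smul]
            congr 1
            field_simp
          rw [this, hT₁, hsplit, add_smul]
        have e12 : T₁ᵀ * T₂ + Xᵀ * T₁ = 0 := by
          rw [hXt, Matrix.smul_mul]
          have : T₁ᵀ * T₂ * T₁ᵀ * T₁ = a₁ • (T₁ᵀ * T₂) := by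
            rw [Matrix.mul_assoc, hT₁]
            simp only [Matrix.mul_smul, Matrix.mul_one]
          rw [this, smul_smul]
          rw [neg_mul, inv_mul_cancel₀ h1, neg_smul, one_smul, add_neg_cancel]
        have e21 : T₂ᵀ * T₁ + T₁ᵀ * X = 0 := by
          rw [hX, Matrix.mul_smul]
          have : T₁ᵀ * (T₁ * T₂ᵀ * T₁) = a₁ • (T₂ᵀ * T₁) := by
            rw [← Matrix.mul_assoc, ← Matrix.mul_assoc, hT₁]
            simp only [Matrix.smul_mul, Matrix.one_mul, Matrix.mul_assoc]
          rw [this, smul_smul]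
          rw [neg_mul, inv_mul_cancel₀ h1, neg_smul, one_smul, add_neg_cancel]
        have e22 : T₂ᵀ * T₂ + T₁ᵀ * T₁ = a • 1 := by
          rw [hT₁, hT₂, ← add_smul, hsplit, add_comm a₂ a₁]
        rw [e11, e12, e21, e22]
        rw [← Matrix.fromBlocks_one (l := Idx k) (m := Idx k), Matrix.fromBlocks_smul]
        simp

end Pfister

section Products

variable {E : Type*} [Field E]

/-- Pfister: product of sums of `2^k` squares is a sum of `2^k` squares. -/
theorem NS.mul_pow2 {k : ℕ} {a b : E} (ha : a ≠ 0) (hA : NS E (2 ^ k) a) (hB : NS E (2 ^ k) b) :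
    NS E (2 ^ k) (a * b) := by
  obtain ⟨T, hT⟩ := exists_pfister_matrix k ha (ns_iff_idx.2 hA)
  obtain ⟨y, hy⟩ := ns_iff_idx.2 hB
  refine ns_iff_idx.1 ⟨T.mulVec y, ?_⟩
  have : ∑ i, (T.mulVec y) i ^ 2 = dotProduct (T.mulVec y) (T.mulVec y) := by
    simp [dotProduct, sq]
  rw [this, Matrix.dotProduct_mulVec, ← Matrix.mulVec_transpose, Matrix.mulVec_mulVec, hT,
    Matrix.smul_mulVec, Matrix.one_mulVec, smul_dotProduct, smul_eq_mul, hy]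
  congr 1
  simp [dotProduct, sq]

end Products

section Level

variable {E : Type*} [Field E]

/-- If `-1` is a sum of `2*2^s - 1` squares, it is a sum of `2^s` squares. -/
theorem level_halve {s : ℕ} (h : NS E (2 * 2 ^ s - 1) (-1 : E)) : NS E (2 ^ s) (-1 : E) := by
  obtain ⟨x, hx⟩ := h
  set H := 2 ^ s with hH
  have hH1 : 1 ≤ H := Nat.one_le_two_pow
  have hsplit : 2 * H - 1 = H + (H - 1) := by omega
  rw [hsplit, Finset.sum_range_add] at hx
  set a := ∑ i ∈ Finset.range H, x i ^ 2 with ha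
  set B := ∑ i ∈ Finset.range (H - 1), x (H + i) ^ 2 with hB
  by_cases h0 : a = 0
  · have hrep : NS E (H - 1) (-1 : E) := ⟨fun i => x (H + i), by rw [hx, h0, zero_add]⟩
    exact hrep.mono (by omega)
  · have hb : NS E H (1 + B) := by
      have key := Finset.sum_range_succ'
        (fun i => (if i = 0 then (1 : E) else x (H + (i - 1))) ^ 2) (H - 1)
      have hHs : H - 1 + 1 = H := by omega
      rw [hHs] at key
      refine ⟨fun i => if i = 0 then 1 else x (H + (i - 1)), ?_⟩
      rw [key]
      simp only [Nat.add_eq_zero, Nat.succ_ne_zero, and_false, if_false, if_pos rfl,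
        Nat.add_sub_cancel, one_pow]
      rw [hB, add_comm]
      simp
    have haNS : NS E H a := ⟨x, rfl⟩
    have hprod : NS E H (a * (1 + B)) := NS.mul_pow2 h0 haNS hb
    obtain ⟨z, hz⟩ := hprod
    refine ⟨fun i => z i * a⁻¹, ?_⟩
    have h1B : 1 + B = -a := by
      have : a + B = -1 := hx.symm
      linear_combination this
    have : a * (1 + B) = -(a ^ 2) := by rw [h1B]; ring
    calc (-1 : E) = (a * (1 + B)) * (a⁻¹) ^ 2 := by
          rw [this]; field_simp
      _ = ∑ i ∈ Finset.range H, (z i * a⁻¹) ^ 2 := by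
          rw [hz, Finset.sum_mul]
          exact Finset.sum_congr rfl fun i _ => (mul_pow _ _ _).symm
      
end Level

section Isotropy

variable {E : Type*} [Field E]

/-- Isotropy of the `n`-fold sum-of-squares form gives `-1` as a sum of `n-1` squares. -/
theorem isotropy_ns {n : ℕ} {c : ℕ → E}
    (hsum : ∑ j ∈ Finset.range n, c j ^ 2 = 0)
    {j0 : ℕ} (hj0 : j0 < n) (hc : c j0 ≠ 0) : NS E (n - 1) (-1) := by
  obtain ⟨m, rfl⟩ : ∃ m, n = m + 1 := ⟨n - 1, by omega⟩
  set C : Fin (m + 1) → E := fun i => c i with hC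
  set J0 : Fin (m + 1) := ⟨j0, hj0⟩ with hJ0
  have hsum' : ∑ i : Fin (m + 1), C i ^ 2 = 0 := by
    rw [Fin.sum_univ_eq_sum_range (fun i => c i ^ 2)]; exact hsum
  rw [Fin.sum_univ_succAbove (fun i => C i ^ 2) J0] at hsum'
  have hCJ0 : C J0 ≠ 0 := hc
  have key : ∑ i : Fin m, (C (J0.succAbove i) * (C J0)⁻¹) ^ 2 = -1 := by
    have : ∑ i : Fin m, (C (J0.succAbove i) * (C J0)⁻¹) ^ 2
        = (∑ i : Fin m, C (J0.succAbove i) ^ 2) * ((C J0)⁻¹) ^ 2 := by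
      rw [Finset.sum_mul]
      exact Finset.sum_congr rfl fun i _ => mul_pow _ _ _
    rw [this]
    have h1 : ∑ i : Fin m, C (J0.succAbove i) ^ 2 = -(C J0 ^ 2) := by linear_combination hsum'
    rw [h1]
    field_simp
  refine ⟨fun i => if h : i < m then C (J0.succAbove ⟨i, h⟩) * (C J0)⁻¹ else 0, ?_⟩
  rw [← key, Nat.add_sub_cancel, ← Fin.sum_univ_eq_sum_range]
  exact Finset.sum_congr rfl fun i _ => by simp [i.isLt]

/-- Main valuation-theoretic induction: from `g·k·q² = Σ Pⱼ²` with `g` prime not dividing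
`k`, produce a representation witnessing isotropy mod `g`. -/
theorem isotropy_aux {g kk : E[X]} (hg : Prime g) (hk : ¬ g ∣ kk) (n : ℕ) :
    ∀ d (q : E[X]), q.natDegree = d → q ≠ 0 → ∀ P : ℕ → E[X],
      g * kk * q ^ 2 = ∑ j ∈ Finset.range n, P j ^ 2 →
      ∃ P' : ℕ → E[X], g ∣ (∑ j ∈ Finset.range n, P' j ^ 2) ∧ ∃ j < n, ¬ g ∣ P' j := by
  have hgdeg : 1 ≤ g.natDegree := by
    rcases Nat.eq_zero_or_pos g.natDegree with h0 | h1
    · exfalso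
      apply hg.not_unit
      rw [eq_C_of_natDegree_eq_zero h0]
      refine isUnit_C.2 (Ne.isUnit fun hc => hg.ne_zero ?_)
      rw [eq_C_of_natDegree_eq_zero h0, hc, map_zero]
    · exact h1
  intro d
  induction d using Nat.strong_induction_on with
  | _ d ih =>
    intro q hdeg hq P hPq
    by_cases hall : ∀ j, j < n → g ∣ P j
    · have hex : ∀ j, j < n → ∃ c, P j = g * c := fun j hj => (hall j hj).elim fun c hc => ⟨c, hc⟩
      choose! R hR using hex
      have hsum : ∑ j ∈ Finset.range n, P j ^ 2
          = g ^ 2 * ∑ j ∈ Finset.range n, R j ^ 2 := by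
        rw [Finset.mul_sum]
        refine Finset.sum_congr rfl fun j hj => ?_
        rw [hR j (Finset.mem_range.1 hj)]; ring
      have hq2 : kk * q ^ 2 = g * ∑ j ∈ Finset.range n, R j ^ 2 := by
        apply mul_left_cancel₀ hg.ne_zero
        rw [← mul_assoc, hPq, hsum]; ring
      have hgq : g ∣ q := by
        rcases (hg.dvd_mul.1 ⟨_, hq2⟩) with h | h
        · exact absurd h hk
        · exact hg.dvd_of_dvd_pow h
      obtain ⟨q', hq'⟩ := hgq
      have hq'0 : q' ≠ 0 := fun h => hq (by rw [hq', h, mul_zero])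
      have heq : g * kk * q' ^ 2 = ∑ j ∈ Finset.range n, R j ^ 2 := by
        apply mul_left_cancel₀ hg.ne_zero
        rw [← hq2, hq']; ring
      have hlt : q'.natDegree < d := by
        rw [← hdeg, hq', Polynomial.natDegree_mul hg.ne_zero hq'0]
        omega
      exact ih q'.natDegree hlt q' rfl hq'0 R heq
    · push_neg at hall
      exact ⟨P, ⟨kk * q ^ 2, by rw [← hPq]; ring⟩, hall⟩

end Isotropy

theorem expChar_pow_odd {F : Type*} [Field F] (h2 : (2 : F) ≠ 0) (q : ℕ)
    (hq : ExpChar F q) (e : ℕ) : Odd (q ^ e) := by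
  cases hq with
  | zero => simp
  | prime hprime =>
      have hq2 : q ≠ 2 := fun h => by
        subst h
        exact h2 (by exact_mod_cast CharP.cast_eq_zero F 2)
      exact (hprime.odd_of_ne_two hq2).pow

section Assembly

/-- Unpacking the Pythagoras number bound. -/
theorem pyth_unpack {K : Type*} [Field K] {N : ℕ}
    (hp : pythagorasNumber K ≤ (N : ℕ∞)) :
    ∀ a : K, (∃ k, SumSqRep K k a) → SumSqRep K N a := by
  set S := {n : ℕ∞ | ∃ m : ℕ, n = m ∧ ∀ a : K, (∃ k, SumSqRep K k a) → SumSqRep K m a} with hS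
  have hne : S.Nonempty := by
    by_contra hcon
    rw [Set.not_nonempty_iff_eq_empty] at hcon
    rw [pythagorasNumber, ← hS, hcon, sInf_empty] at hp
    exact (by simp : ¬ (⊤ : ℕ∞) ≤ (N : ℕ∞)) hp
  obtain ⟨m, hm, hP⟩ := csInf_mem hne
  have hmN : (m : ℕ∞) ≤ (N : ℕ∞) := by
    rw [← hm]; exact hp
  have hmn : m ≤ N := by exact_mod_cast hmN
  intro a ha
  exact sumSqRep_iff_ns.2 ((sumSqRep_iff_ns.1 (hP a ha)).mono hmn)

/-- Descend a representation of `-1` as a sum of squares to the separable closure. -/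
theorem descend_to_sep {F L : Type*} [Field F] [Field L] [Algebra F L]
    [FiniteDimensional F L] (hnr : IsNonreal L) :
    (2 : F) ≠ 0 → ∃ m, SumSqRep (separableClosure F L) m (-1) := by
  intro h2
  haveI : Algebra.IsAlgebraic F L := Algebra.IsAlgebraic.of_finite F L
  set K := separableClosure F L
  obtain ⟨m, γ, hγ⟩ := hnr
  set q := ringExpChar F with hq
  haveI hFq : ExpChar F q := ringExpChar.expChar F
  haveI hKq : ExpChar K q := expChar_of_injective_ringHom (algebraMap F K).injective q
  haveI hLq : ExpChar L q := expChar_of_injective_ringHom (algebraMap F L).injective q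
  have hodd : ∀ e : ℕ, Odd (q ^ e) := expChar_pow_odd h2 q hFq
  have hpow : ∀ x : L, ∃ e : ℕ, x ^ q ^ e ∈ (algebraMap K L).range := fun x =>
    IsPurelyInseparable.pow_mem K q x
  choose e he using fun i => hpow (γ i)
  set E0 := Finset.univ.sup e with hE0
  have hpow' : ∀ i, γ i ^ q ^ E0 ∈ (algebraMap K L).range := by
    intro i
    have hle : e i ≤ E0 := Finset.le_sup (Finset.mem_univ i)
    have hee : e i + (E0 - e i) = E0 := by omega
    have : γ i ^ q ^ E0 = (γ i ^ q ^ e i) ^ q ^ (E0 - e i) := by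
      rw [← pow_mul, ← pow_add, hee]
    rw [this]
    exact pow_mem (he i) _
  choose δ hδ using hpow'
  refine ⟨m, δ, ?_⟩
  apply (algebraMap K L).injective
  rw [RingHom.map_neg, RingHom.map_one, _root_.map_sum]
  have : ∀ i : Fin m, (algebraMap K L) (δ i ^ 2) = (γ i ^ 2) ^ q ^ E0 := by
    intro i
    rw [map_pow, hδ i, ← pow_mul, ← pow_mul, mul_comm]
  calc (-1 : L) = (-1 : L) ^ q ^ E0 := ((hodd E0).neg_one_pow).symm
    _ = (∑ i : Fin m, γ i ^ 2) ^ q ^ E0 := by rw [← hγ]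
    _ = ∑ i : Fin m, (γ i ^ 2) ^ q ^ E0 := by rw [sum_pow_char_pow]
    _ = ∑ i : Fin m, (algebraMap K L) (δ i ^ 2) := by
        exact Finset.sum_congr rfl fun i _ => (this i).symm

end Assembly

section Denoms

variable {F : Type*} [Field F]

theorem clear_denoms {n : ℕ} {h : F[X]}
    (hrep : NS (RatFunc F) n (algebraMap F[X] (RatFunc F) h)) :
    ∃ (q : F[X]) (P : ℕ → F[X]), q ≠ 0 ∧ h * q ^ 2 = ∑ j ∈ Finset.range n, P j ^ 2 := by
  obtain ⟨f, hf⟩ := hrep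
  obtain ⟨b, hb⟩ := IsLocalization.exist_integer_multiples
    (nonZeroDivisors F[X]) (Finset.range n) f
  have hq0 : (b : F[X]) ≠ 0 := nonZeroDivisors.coe_ne_zero b
  have hbint : ∀ j, j < n → ∃ p : F[X],
      algebraMap F[X] (RatFunc F) p = algebraMap F[X] (RatFunc F) (b : F[X]) * f j := by
    intro j hj
    obtain ⟨p, hp⟩ := hb j (Finset.mem_range.2 hj)
    exact ⟨p, by rw [hp, Algebra.smul_def]⟩
  choose! P hP using hbint
  refine ⟨(b : F[X]), P, hq0, ?_⟩
  apply RatFunc.algebraMap_injective F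
  rw [_root_.map_mul, _root_.map_pow, _root_.map_sum, hf, Finset.sum_mul]
  refine Finset.sum_congr rfl fun j hj => ?_
  rw [_root_.map_pow, hP j (Finset.mem_range.1 hj)]
  ring

theorem poly_SOS {m : ℕ} (b : ℕ → F[X]) :
    NS (RatFunc F) (m + 1)
      (algebraMap F[X] (RatFunc F) (1 + ∑ i ∈ Finset.range m, (b i) ^ 2)) := by
  refine ⟨fun j => if j = 0 then 1 else algebraMap F[X] (RatFunc F) (b (j - 1)), ?_⟩
  rw [Finset.sum_range_succ']
  simp only [Nat.add_eq_zero, Nat.succ_ne_zero, and_false, if_false, if_pos rfl, if_true,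
    Nat.add_sub_cancel, one_pow]
  rw [_root_.map_add, _root_.map_one, _root_.map_sum, add_comm]
  congr 1
  exact Finset.sum_congr rfl fun i _ => _root_.map_pow _ _ _

theorem X_SOS (h2 : (2 : F) ≠ 0) {m : ℕ} {u : ℕ → F}
    (hu : (-1 : F) = ∑ i ∈ Finset.range m, u i ^ 2) :
    NS (RatFunc F) (m + 1) (algebraMap F[X] (RatFunc F) Polynomial.X) := by
  have two2 : (2 : RatFunc F) ≠ 0 := by
    intro hC
    apply h2
    have h1 : (algebraMap F[X] (RatFunc F)) 2 = 0 := by rw [map_ofNat]; exact_mod_cast hC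
    have h2' : (2 : F[X]) = 0 := RatFunc.algebraMap_injective F (by rw [h1, map_zero])
    have h3 := congrArg (Polynomial.eval 0) h2'
    simpa using h3
  set A := algebraMap F[X] (RatFunc F) Polynomial.X with hA
  refine ⟨fun j => if j = 0 then (A + 1) * (2 : RatFunc F)⁻¹
    else (A - 1) * (2 : RatFunc F)⁻¹ * algebraMap F[X] (RatFunc F) (Polynomial.C (u (j - 1))), ?_⟩
  rw [Finset.sum_range_succ']
  simp only [Nat.add_eq_zero, Nat.succ_ne_zero, and_false, if_false, if_pos rfl, if_true,
    Nat.add_sub_cancel]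
  have hsum : ∑ i ∈ Finset.range m,
      ((A - 1) * (2 : RatFunc F)⁻¹ * algebraMap F[X] (RatFunc F) (Polynomial.C (u i))) ^ 2
      = ((A - 1) * (2 : RatFunc F)⁻¹) ^ 2 * (-1) := by
    have : ∑ i ∈ Finset.range m,
        ((A - 1) * (2 : RatFunc F)⁻¹ * algebraMap F[X] (RatFunc F) (Polynomial.C (u i))) ^ 2
        = ((A - 1) * (2 : RatFunc F)⁻¹) ^ 2 *
          ∑ i ∈ Finset.range m, (algebraMap F[X] (RatFunc F) (Polynomial.C (u i))) ^ 2 := by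
      rw [Finset.mul_sum]
      exact Finset.sum_congr rfl fun i _ => by ring
    rw [this]
    congr 1
    have : ∑ i ∈ Finset.range m, (algebraMap F[X] (RatFunc F) (Polynomial.C (u i))) ^ 2
        = algebraMap F[X] (RatFunc F) (∑ i ∈ Finset.range m, (Polynomial.C (u i)) ^ 2) := by
      rw [_root_.map_sum]
      exact Finset.sum_congr rfl fun i _ => (map_pow _ _ _).symm
    rw [this]
    have hC : (∑ i ∈ Finset.range m, (Polynomial.C (u i)) ^ 2 : F[X]) = -1 := by
      have : (∑ i ∈ Finset.range m, (Polynomial.C (u i)) ^ 2 : F[X])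
          = Polynomial.C (∑ i ∈ Finset.range m, u i ^ 2) := by
        rw [_root_.map_sum]
        exact Finset.sum_congr rfl fun i _ => by rw [← Polynomial.C_pow]
      rw [this, ← hu]
      simp
    rw [hC]
    simp
  rw [hsum]
  field_simp
  ring

end Denoms

/-- one direction of Pfister's theorem. If `p(F(t)) ≤ 2^r`
then every finite nonreal extension `L/F` has level `s(L) ≤ 2^(r-1)`. -/
theorem level_le_of_pythagoras_ratFunc_le (F : Type*) [Field F]
    (h2 : (2 : F) ≠ 0) (r : ℕ) (hr : 1 ≤ r)
    (hp : pythagorasNumber (RatFunc F) ≤ ((2 ^ r : ℕ) : ℕ∞)) :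
    ∀ (L : Type*) [Field L] [Algebra F L] [FiniteDimensional F L],
      IsNonreal L → fieldLevel L ≤ ((2 ^ (r - 1) : ℕ) : ℕ∞) := by
  intro L _ _ _ hnr
  have h2r : 2 * 2 ^ (r - 1) = 2 ^ r := by
    rw [← pow_succ']
    congr 1
    omega
  have hp2 : ∀ a : RatFunc F, (∃ k, SumSqRep (RatFunc F) k a) →
      SumSqRep (RatFunc F) (2 ^ r) a := pyth_unpack hp
  suffices hkey : SumSqRep L (2 ^ (r - 1)) (-1) by
    exact sInf_le ⟨2 ^ (r - 1), rfl, hkey⟩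
  haveI : Algebra.IsAlgebraic F L := Algebra.IsAlgebraic.of_finite F L
  set K := separableClosure F L with hKdef
  obtain ⟨m0, hK0⟩ := descend_to_sep hnr h2
  obtain ⟨δ, hδ⟩ := sumSqRep_iff_ns.1 hK0
  obtain ⟨θ, hθ⟩ := Field.exists_primitive_element F K
  have hint : IsIntegral F θ := IsIntegral.of_finite F θ
  set g := minpoly F θ with hgdef
  have hgM : g.Monic := minpoly.monic hint
  have hgP : Prime g := minpoly.prime hint
  have hgd : 1 ≤ g.natDegree := minpoly.natDegree_pos hint
  have hrep : ∀ i, i < m0 → ∃ p : F[X],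
      Polynomial.aeval θ p = δ i ∧ p.natDegree + 1 ≤ g.natDegree := by
    intro i him
    have h1 : δ i ∈ IntermediateField.adjoin F {θ} := by
      rw [show IntermediateField.adjoin F {θ} = ⊤ from hθ]
      exact IntermediateField.mem_top
    rw [← IntermediateField.mem_toSubalgebra,
      IntermediateField.adjoin_simple_toSubalgebra_of_isAlgebraic hint.isAlgebraic,
      Algebra.adjoin_singleton_eq_range_aeval] at h1
    obtain ⟨p0, hp0⟩ := h1
    refine ⟨p0 %ₘ g, ?_, ?_⟩
    · have hdiv := Polynomial.modByMonic_add_div p0 g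
      calc Polynomial.aeval θ (p0 %ₘ g)
          = Polynomial.aeval θ (p0 %ₘ g)
            + Polynomial.aeval θ g * Polynomial.aeval θ (p0 /ₘ g) := by
            rw [minpoly.aeval]; ring
        _ = Polynomial.aeval θ p0 := by rw [← _root_.map_mul, ← _root_.map_add, hdiv]
        _ = δ i := hp0
    · by_cases hz : p0 %ₘ g = 0
      · rw [hz]
        simpa using hgd
      · have hlt := Polynomial.natDegree_lt_natDegree hz
          (Polynomial.degree_modByMonic_lt p0 hgM)
        omega
  choose! b hbe hbd using hrep
  set h : F[X] := 1 + ∑ i ∈ Finset.range m0, (b i) ^ 2 with hh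
  have hdvd : g ∣ h := by
    apply minpoly.dvd F θ
    rw [hh, _root_.map_add, _root_.map_one, _root_.map_sum]
    have hc : ∀ i ∈ Finset.range m0, (Polynomial.aeval θ) ((b i) ^ 2) = δ i ^ 2 :=
      fun i hi => by rw [_root_.map_pow, hbe i (Finset.mem_range.1 hi)]
    rw [Finset.sum_congr rfl hc, ← hδ]
    ring
  by_cases hh0 : h = 0
  · -- F is nonreal; use the element X
    have hFnr : (-1 : F) = ∑ i ∈ Finset.range m0, ((b i).eval 0) ^ 2 := by
      have h1 := congrArg (Polynomial.eval 0) hh0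
      rw [hh] at h1
      simp only [Polynomial.eval_add, Polynomial.eval_one, Polynomial.eval_finset_sum,
        Polynomial.eval_pow, Polynomial.eval_zero] at h1
      linear_combination -h1
    have hA2 : SumSqRep (RatFunc F) (2 ^ r) (algebraMap F[X] (RatFunc F) Polynomial.X) :=
      hp2 _ ⟨m0 + 1, sumSqRep_iff_ns.2 (X_SOS h2 hFnr)⟩
    obtain ⟨q, P, hq0, hPE⟩ := clear_denoms (sumSqRep_iff_ns.1 hA2)
    have hknd : ¬ ((Polynomial.X : F[X]) ∣ 1) :=
      fun hd => Polynomial.not_isUnit_X (isUnit_of_dvd_one hd)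
    have hXk : (Polynomial.X : F[X]) * 1 * q ^ 2 = ∑ j ∈ Finset.range (2 ^ r), P j ^ 2 := by
      rw [mul_one]; exact hPE
    obtain ⟨P', hPdvd, j0, hj0n, hj0⟩ :=
      isotropy_aux Polynomial.prime_X hknd (2 ^ r) q.natDegree q rfl hq0 P hXk
    set c : ℕ → F := fun j => (P' j).eval 0 with hcdef
    have hcsum : ∑ j ∈ Finset.range (2 ^ r), c j ^ 2 = 0 := by
      obtain ⟨w, hw⟩ := hPdvd
      have h1 := congrArg (Polynomial.eval 0) hw
      simp only [Polynomial.eval_finset_sum, Polynomial.eval_pow, Polynomial.eval_mul,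
        Polynomial.eval_X, zero_mul] at h1
      exact h1
    have hcj0 : c j0 ≠ 0 := by
      intro h0
      exact hj0 (Polynomial.X_dvd_iff.2 (by rwa [Polynomial.coeff_zero_eq_eval_zero]))
    have hiso : NS F (2 ^ r - 1) (-1) := isotropy_ns hcsum hj0n hcj0
    rw [← h2r] at hiso
    obtain ⟨w, hw⟩ := level_halve hiso
    refine sumSqRep_iff_ns.2 ⟨fun i => algebraMap F L (w i), ?_⟩
    calc (-1 : L) = algebraMap F L (-1) := by rw [RingHom.map_neg, RingHom.map_one]
      _ = algebraMap F L (∑ i ∈ Finset.range (2 ^ (r - 1)), w i ^ 2) := by rw [← hw]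
      _ = ∑ i ∈ Finset.range (2 ^ (r - 1)), (algebraMap F L (w i)) ^ 2 := by
          rw [_root_.map_sum]
          exact Finset.sum_congr rfl fun i _ => _root_.map_pow _ _ _
  · -- main branch
    obtain ⟨kk, hkk⟩ := hdvd
    have hknd : ¬ g ∣ kk := by
      intro hd
      obtain ⟨w, hw⟩ := hd
      have hg2 : g ^ 2 ∣ h := ⟨w, by rw [hkk, hw]; ring⟩
      have hb2 : 2 * g.natDegree ≤ h.natDegree := by
        have := Polynomial.natDegree_le_of_dvd hg2 hh0
        rwa [Polynomial.natDegree_pow] at this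
      have hb1 : h.natDegree ≤ 2 * g.natDegree - 2 := by
        rw [hh]
        refine le_trans (Polynomial.natDegree_add_le _ _) ?_
        rw [Polynomial.natDegree_one]
        refine max_le (by omega) ?_
        refine le_trans (Polynomial.natDegree_sum_le_of_forall_le _ _ fun i hi => ?_)
          (le_refl _)
        rw [Polynomial.natDegree_pow]
        have := hbd i (Finset.mem_range.1 hi)
        omega
      omega
    have hA2 : SumSqRep (RatFunc F) (2 ^ r) (algebraMap F[X] (RatFunc F) h) :=
      hp2 _ ⟨m0 + 1, sumSqRep_iff_ns.2 (by rw [hh]; exact poly_SOS b)⟩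
    obtain ⟨q, P, hq0, hPE⟩ := clear_denoms (sumSqRep_iff_ns.1 hA2)
    have heq : g * kk * q ^ 2 = ∑ j ∈ Finset.range (2 ^ r), P j ^ 2 := by
      rw [← hkk]; exact hPE
    obtain ⟨P', hPdvd, j0, hj0n, hj0⟩ :=
      isotropy_aux hgP hknd (2 ^ r) q.natDegree q rfl hq0 P heq
    set c : ℕ → K := fun j => Polynomial.aeval θ (P' j) with hcdef
    have hcsum : ∑ j ∈ Finset.range (2 ^ r), c j ^ 2 = 0 := by
      obtain ⟨w, hw⟩ := hPdvd
      have h1 := congrArg (Polynomial.aeval θ) hw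
      rw [_root_.map_sum, _root_.map_mul, minpoly.aeval, zero_mul] at h1
      rw [← h1]
      exact Finset.sum_congr rfl fun j _ => (_root_.map_pow _ _ _).symm
    have hcj0 : c j0 ≠ 0 := fun h0 => hj0 (minpoly.dvd F θ h0)
    have hiso : NS K (2 ^ r - 1) (-1) := isotropy_ns hcsum hj0n hcj0
    rw [← h2r] at hiso
    obtain ⟨w, hw⟩ := level_halve hiso
    refine sumSqRep_iff_ns.2 ⟨fun i => algebraMap K L (w i), ?_⟩
    calc (-1 : L) = algebraMap K L (-1) := by rw [RingHom.map_neg, RingHom.map_one]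
      _ = algebraMap K L (∑ i ∈ Finset.range (2 ^ (r - 1)), w i ^ 2) := by rw [← hw]
      _ = ∑ i ∈ Finset.range (2 ^ (r - 1)), (algebraMap K L (w i)) ^ 2 := by
          rw [_root_.map_sum]
          exact Finset.sum_congr rfl fun i _ => _root_.map_pow _ _ _
end
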